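/- For a finite-dimensional Lie algebra L over a field F of characteristic ≠ 2, the breadth b(L) equals 1 if and only if dim [L,L] = 1. -/
import Mathlib


open Module

/-- The breadth of an element `x`: the rank of `ad x`. -/
noncomputable def elemBreadth (F : Type*) {L : Type*} [Field F] [LieRing L] [LieAlgebra F L]
    (x : L) : ℕ :=
  finrank F (LinearMap.range (LieAlgebra.ad F L x))

/-- `L` has breadth `n`: `n` is the maximum of the ranks of the maps `ad x`, `x ∈ L`. -/
def HasBreadth (F L : Type*) [Field F] [LieRing L] [LieAlgebra F L] (n : ℕ) : Prop :=
  (∀ x : L, elemBreadth F x ≤ n) ∧ ∃ x : L, elemBreadth F x = n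

section Aux

variable {F L : Type*} [Field F] [LieRing L] [LieAlgebra F L] [FiniteDimensional F L]

/-- A subspace of dimension `≤ 1` containing a nonzero vector `v` is the line spanned by `v`. -/
lemma aux_span_eq {p : Submodule F L} (hp : finrank F p ≤ 1) {v : L} (hv : v ∈ p)
    (hv0 : v ≠ 0) : p = Submodule.span F {v} := by
  refine (Submodule.eq_of_le_of_finrank_le ((Submodule.span_singleton_le_iff_mem _ _).mpr hv)
    ?_).symm
  rw [finrank_span_singleton hv0]
  exact hp

lemma aux_mem_range (a b : L) : ⁅a, b⁆ ∈ LinearMap.range (LieAlgebra.ad F L a) :=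
  ⟨b, by simp⟩

lemma aux_range_eq (h : ∀ x : L, elemBreadth F x ≤ 1) {a b : L} (hab : ⁅a, b⁆ ≠ 0) :
    LinearMap.range (LieAlgebra.ad F L a) = Submodule.span F {⁅a, b⁆} :=
  aux_span_eq (h a) (aux_mem_range a b) hab

lemma aux_mem_span (h : ∀ x : L, elemBreadth F x ≤ 1)
    {x y : L} (hxy : ⁅x, y⁆ ≠ 0) (a b : L) : ⁅a, b⁆ ∈ Submodule.span F {⁅x, y⁆} := by
  by_cases hab : ⁅a, b⁆ = 0
  · rw [hab]; exact Submodule.zero_mem _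
  have hx := aux_range_eq h hxy
  by_cases hay : ⁅a, y⁆ = 0
  · -- shift trick: consider `a + x`
    have hc : ⁅a + x, y⁆ = ⁅x, y⁆ := by rw [add_lie, hay, zero_add]
    have hcy : ⁅a + x, y⁆ ≠ 0 := hc ▸ hxy
    have hrc : LinearMap.range (LieAlgebra.ad F L (a + x)) = Submodule.span F {⁅x, y⁆} := by
      rw [aux_range_eq h hcy, hc]
    have h1 : ⁅a + x, b⁆ ∈ Submodule.span F {⁅x, y⁆} := hrc ▸ aux_mem_range (a + x) b
    have h2 : ⁅x, b⁆ ∈ Submodule.span F {⁅x, y⁆} := hx ▸ aux_mem_range x b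
    have : ⁅a, b⁆ = ⁅a + x, b⁆ - ⁅x, b⁆ := by rw [add_lie]; abel
    rw [this]
    exact Submodule.sub_mem _ h1 h2
  · -- here `⁅a, y⁆ ≠ 0`, so `range (ad a) = span {⁅a, y⁆} ⊆ span {⁅x, y⁆}`
    have hyx : ⁅y, x⁆ ≠ 0 := by
      simpa only [← lie_skew x y, neg_ne_zero] using hxy
    have hy : LinearMap.range (LieAlgebra.ad F L y) = Submodule.span F {⁅y, x⁆} :=
      aux_range_eq h hyx
    have hya : ⁅y, a⁆ ∈ Submodule.span F {⁅y, x⁆} := hy ▸ aux_mem_range y a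
    have hs : ∀ u v : L, (⁅u, v⁆ : L) = -⁅v, u⁆ := by
      intro u v; rw [← lie_skew v u, neg_neg]
    have hle : Submodule.span F {⁅y, x⁆} ≤ Submodule.span F {⁅x, y⁆} := by
      rw [Submodule.span_singleton_le_iff_mem, hs y x]
      exact Submodule.neg_mem _ (Submodule.mem_span_singleton_self _)
    have hay' : ⁅a, y⁆ ∈ Submodule.span F {⁅x, y⁆} := by
      rw [hs a y]
      exact Submodule.neg_mem _ (hle hya)
    have hr : LinearMap.range (LieAlgebra.ad F L a) = Submodule.span F {⁅a, y⁆} :=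
      aux_range_eq h hay
    have h1 : ⁅a, b⁆ ∈ Submodule.span F {⁅a, y⁆} := hr ▸ aux_mem_range a b
    have hle2 : Submodule.span F {⁅a, y⁆} ≤ Submodule.span F {⁅x, y⁆} := by
      rwa [Submodule.span_singleton_le_iff_mem]
    exact hle2 h1

lemma aux_derived_eq_span (h : ∀ x : L, elemBreadth F x ≤ 1)
    {x y : L} (hxy : ⁅x, y⁆ ≠ 0) :
    (LieAlgebra.derivedSeries F L 1).toSubmodule = Submodule.span F {⁅x, y⁆} := by
  have h1 : LieAlgebra.derivedSeries F L 1 = ⁅(⊤ : LieIdeal F L), (⊤ : LieIdeal F L)⁆ := by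
    rw [LieAlgebra.derivedSeries_def, LieAlgebra.derivedSeriesOfIdeal_succ,
      LieAlgebra.derivedSeriesOfIdeal_zero]
  rw [h1]
  apply le_antisymm
  · rw [LieSubmodule.lieIdeal_oper_eq_linear_span']
    rw [Submodule.span_le]
    rintro m ⟨a, -, b, -, rfl⟩
    exact aux_mem_span h hxy a b
  · rw [Submodule.span_singleton_le_iff_mem]
    exact LieSubmodule.lie_mem_lie (LieSubmodule.mem_top x) (LieSubmodule.mem_top y)

lemma aux_exists_bracket (hne : (LieAlgebra.derivedSeries F L 1).toSubmodule ≠ ⊥) :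
    ∃ x y : L, ⁅x, y⁆ ≠ 0 := by
  by_contra hcon
  push_neg at hcon
  apply hne
  have h1 : LieAlgebra.derivedSeries F L 1 = ⁅(⊤ : LieIdeal F L), (⊤ : LieIdeal F L)⁆ := by
    rw [LieAlgebra.derivedSeries_def, LieAlgebra.derivedSeriesOfIdeal_succ,
      LieAlgebra.derivedSeriesOfIdeal_zero]
  rw [h1, LieSubmodule.lieIdeal_oper_eq_linear_span']
  refine le_bot_iff.mp (Submodule.span_le.mpr ?_)
  rintro m ⟨a, -, b, -, rfl⟩
  simp [hcon a b]

end Aux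

theorem stmt1 (F L : Type*) [Field F] [LieRing L] [LieAlgebra F L]
    [FiniteDimensional F L] (hchar : ringChar F ≠ 2) :
    HasBreadth F L 1 ↔ finrank F (LieAlgebra.derivedSeries F L 1) = 1 := by
  constructor
  · rintro ⟨hle, x0, hx0⟩
    -- there is a nonzero bracket
    have hr : LinearMap.range (LieAlgebra.ad F L x0) ≠ ⊥ := by
      intro hbot
      rw [elemBreadth, hbot] at hx0
      simp at hx0
    obtain ⟨z, ⟨y, hy⟩, hz0⟩ := Submodule.exists_mem_ne_zero_of_ne_bot hr
    have hxy : ⁅x0, y⁆ ≠ 0 := by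
      have : (LieAlgebra.ad F L x0) y = ⁅x0, y⁆ := by simp
      rw [this] at hy
      rw [hy]; exact hz0
    have he := aux_derived_eq_span hle hxy
    have : finrank F (LieAlgebra.derivedSeries F L 1).toSubmodule =
        finrank F (Submodule.span F {⁅x0, y⁆}) := by rw [he]
    rw [finrank_span_singleton hxy] at this
    exact this
  · intro hfin
    have hne : (LieAlgebra.derivedSeries F L 1).toSubmodule ≠ ⊥ := by
      intro hbot
      have hco : finrank F (LieAlgebra.derivedSeries F L 1) =
          finrank F (LieAlgebra.derivedSeries F L 1).toSubmodule := rfl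
      rw [hco, hbot] at hfin
      simp at hfin
    have hsub : ∀ a : L, LinearMap.range (LieAlgebra.ad F L a) ≤
        (LieAlgebra.derivedSeries F L 1).toSubmodule := by
      intro a z hz
      obtain ⟨b, rfl⟩ := hz
      have h1 : LieAlgebra.derivedSeries F L 1 = ⁅(⊤ : LieIdeal F L), (⊤ : LieIdeal F L)⁆ := by
        rw [LieAlgebra.derivedSeries_def, LieAlgebra.derivedSeriesOfIdeal_succ,
          LieAlgebra.derivedSeriesOfIdeal_zero]
      rw [h1]
      have : (LieAlgebra.ad F L a) b = ⁅a, b⁆ := by simp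
      rw [this]
      exact LieSubmodule.lie_mem_lie (LieSubmodule.mem_top a) (LieSubmodule.mem_top b)
    have hle : ∀ a : L, elemBreadth F a ≤ 1 := by
      intro a
      calc elemBreadth F a ≤ finrank F (LieAlgebra.derivedSeries F L 1).toSubmodule :=
            Submodule.finrank_mono (hsub a)
        _ = 1 := hfin
    refine ⟨hle, ?_⟩
    obtain ⟨a, b, hab⟩ := aux_exists_bracket hne
    refine ⟨a, le_antisymm (hle a) ?_⟩
    have hrne : LinearMap.range (LieAlgebra.ad F L a) ≠ ⊥ := by
      intro hbot
      apply hab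
      have := aux_mem_range (F := F) a b
      rw [hbot] at this
      simpa using this
    rw [elemBreadth, Nat.one_le_iff_ne_zero]
    intro h0
    exact hrne (Submodule.finrank_eq_zero.mp h0)
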